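/- For 1/2 < γ < 1 and a fixed positive integer α, consider along even integers n the quantity R(n) = (Σ_{j ≤ n² + ⌊(1/2)·⌊n^{2(1−γ)}/α − 1⌋⌋} e^{j^γ}) / (Σ_{j ≤ n² + ⌊n^{2(1−γ)}⌋} e^{j^γ}). Then R(n) → e^{−γ(1 − 1/(2α))} as n → ∞. -/

import Mathlib

open Real Filter Finset



lemma tangent {γ x y : ℝ} (hγ0 : 0 < γ) (hγ1 : γ ≤ 1) (hy : 0 < y) (hx : 0 ≤ x) :
    x ^ γ ≤ y ^ γ + γ * y ^ (γ - 1) * (x - y) := by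
  have hs : -1 ≤ x / y - 1 := by
    have : 0 ≤ x / y := div_nonneg hx hy.le
    linarith
  have hb := rpow_one_add_le_one_add_mul_self hs hγ0.le hγ1
  rw [add_sub_cancel] at hb
  rw [Real.div_rpow hx hy.le] at hb
  have hyγ : 0 < y ^ γ := Real.rpow_pos_of_pos hy γ
  have h3 : x ^ γ ≤ (1 + γ * (x / y - 1)) * y ^ γ := by
    have := mul_le_mul_of_nonneg_right hb hyγ.le
    rwa [div_mul_cancel₀ _ hyγ.ne'] at this
  have h4 : y ^ (γ - 1) = y ^ γ / y := by
    rw [Real.rpow_sub hy, Real.rpow_one]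
  rw [h4]
  have : (1 + γ * (x / y - 1)) * y ^ γ = y ^ γ + γ * (y ^ γ / y) * (x - y) := by
    field_simp
  linarith [this ▸ h3]




-- reindex helper
lemma reindex (N : ℕ) (q : ℝ) : ∑ j ∈ Finset.Icc 1 N, q ^ (N - j) = ∑ k ∈ Finset.range N, q ^ k := by
  rw [← Finset.Ico_add_one_right_eq_Icc, Finset.sum_Ico_eq_sum_range]
  rw [← Finset.sum_range_reflect]
  apply Finset.sum_congr rfl
  intro i hi
  simp only [Finset.mem_range] at hi
  congr 1
  omega

lemma sum_upper {γ : ℝ} (hγ0 : 0 < γ) (hγ1 : γ ≤ 1) (N : ℕ) (hN : 1 ≤ N) :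
    ∑ j ∈ Finset.Icc 1 N, Real.exp ((j : ℝ) ^ γ) ≤
      Real.exp ((N : ℝ) ^ γ) / (1 - Real.exp (-(γ * (N : ℝ) ^ (γ - 1)))) := by
  set q : ℝ := Real.exp (-(γ * (N : ℝ) ^ (γ - 1))) with hq
  have hNpos : (0:ℝ) < N := by exact_mod_cast hN
  have hexp : 0 < γ * (N : ℝ) ^ (γ - 1) := mul_pos hγ0 (Real.rpow_pos_of_pos hNpos _)
  have hq1 : q < 1 := Real.exp_lt_one_iff.mpr (by linarith)
  have hq0 : 0 ≤ q := (Real.exp_pos _).le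
  have step : ∀ j ∈ Finset.Icc 1 N, Real.exp ((j : ℝ) ^ γ) ≤ Real.exp ((N : ℝ) ^ γ) * q ^ (N - j) := by
    intro j hj
    simp only [Finset.mem_Icc] at hj
    have hjN : (j : ℝ) ≤ N := by exact_mod_cast hj.2
    have hj0 : (0:ℝ) ≤ j := by positivity
    have ht := tangent hγ0 hγ1 hNpos hj0
    have hcast : ((N - j : ℕ) : ℝ) = (N : ℝ) - j := by
      have := hj.2; push_cast [Nat.cast_sub this]; ring
    rw [← Real.exp_nat_mul, ← Real.exp_add]
    apply Real.exp_le_exp.mpr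
    rw [hcast]
    nlinarith [ht]
  calc ∑ j ∈ Finset.Icc 1 N, Real.exp ((j : ℝ) ^ γ)
      ≤ ∑ j ∈ Finset.Icc 1 N, Real.exp ((N : ℝ) ^ γ) * q ^ (N - j) := Finset.sum_le_sum step
    _ = Real.exp ((N : ℝ) ^ γ) * ∑ j ∈ Finset.Icc 1 N, q ^ (N - j) := by rw [Finset.mul_sum]
    _ = Real.exp ((N : ℝ) ^ γ) * ∑ k ∈ Finset.range N, q ^ k := by rw [reindex]
    _ ≤ Real.exp ((N : ℝ) ^ γ) / (1 - q) := by
        rw [geom_sum_eq hq1.ne, div_eq_mul_inv (Real.exp _)]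
        apply mul_le_mul_of_nonneg_left _ (Real.exp_pos _).le
        have h1q : (0:ℝ) < 1 - q := by linarith
        have hqN : 0 ≤ q ^ N := pow_nonneg hq0 N
        have heq : (q ^ N - 1) / (q - 1) = (1 - q ^ N) / (1 - q) := by
          rw [div_eq_div_iff (by linarith) (by linarith)]; ring
        rw [heq, inv_eq_one_div, div_le_div_iff₀ h1q h1q]
        nlinarith

lemma sum_lower {γ : ℝ} (hγ0 : 0 < γ) (hγ1 : γ ≤ 1) (M N : ℕ) (hM : 1 ≤ M) (hMN : M ≤ N) :
    Real.exp ((N : ℝ) ^ γ) * (1 - Real.exp (-(γ * (M : ℝ) ^ (γ - 1))) ^ (N - M + 1)) /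
        (1 - Real.exp (-(γ * (M : ℝ) ^ (γ - 1)))) ≤
      ∑ j ∈ Finset.Icc 1 N, Real.exp ((j : ℝ) ^ γ) := by
  set r : ℝ := Real.exp (-(γ * (M : ℝ) ^ (γ - 1))) with hr
  have hMpos : (0:ℝ) < M := by exact_mod_cast hM
  have hexp : 0 < γ * (M : ℝ) ^ (γ - 1) := mul_pos hγ0 (Real.rpow_pos_of_pos hMpos _)
  have hr1 : r < 1 := Real.exp_lt_one_iff.mpr (by linarith)
  have hr0 : 0 < r := Real.exp_pos _
  have step : ∀ j ∈ Finset.Icc M N, Real.exp ((N : ℝ) ^ γ) * r ^ (N - j) ≤ Real.exp ((j : ℝ) ^ γ) := by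
    intro j hj
    simp only [Finset.mem_Icc] at hj
    have hjpos : (0:ℝ) < j := by
      have : 1 ≤ j := le_trans hM hj.1
      exact_mod_cast this
    have hjN : (j : ℝ) ≤ N := by exact_mod_cast hj.2
    have ht := tangent hγ0 hγ1 hjpos (by positivity : (0:ℝ) ≤ (N:ℝ))
    have hmono : (j : ℝ) ^ (γ - 1) ≤ (M : ℝ) ^ (γ - 1) := by
      apply Real.rpow_le_rpow_of_nonpos hMpos (by exact_mod_cast hj.1) (by linarith)
    have hcast : ((N - j : ℕ) : ℝ) = (N : ℝ) - j := by
      push_cast [Nat.cast_sub hj.2]; ring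
    rw [hr, ← Real.exp_nat_mul, ← Real.exp_add]
    apply Real.exp_le_exp.mpr
    rw [hcast]
    have h5 : (j:ℝ) ^ (γ - 1) * ((N:ℝ) - j) ≤ (M:ℝ) ^ (γ - 1) * ((N:ℝ) - j) :=
      mul_le_mul_of_nonneg_right hmono (sub_nonneg.mpr hjN)
    nlinarith [ht, mul_le_mul_of_nonneg_left h5 hγ0.le]
  have hsub : Finset.Icc M N ⊆ Finset.Icc 1 N := Finset.Icc_subset_Icc hM le_rfl
  have reidx : ∑ j ∈ Finset.Icc M N, r ^ (N - j) = ∑ k ∈ Finset.range (N - M + 1), r ^ k := by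
    rw [← Finset.Ico_add_one_right_eq_Icc, Finset.sum_Ico_eq_sum_range]
    have hlen : N + 1 - M = N - M + 1 := by omega
    rw [hlen, ← Finset.sum_range_reflect]
    apply Finset.sum_congr rfl
    intro i hi
    simp only [Finset.mem_range] at hi
    congr 1
    omega
  have geom : ∑ k ∈ Finset.range (N - M + 1), r ^ k = (1 - r ^ (N - M + 1)) / (1 - r) := by
    rw [geom_sum_eq hr1.ne]
    rw [div_eq_div_iff (by linarith) (by linarith)]
    ring
  calc Real.exp ((N : ℝ) ^ γ) * (1 - r ^ (N - M + 1)) / (1 - r)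
      = Real.exp ((N : ℝ) ^ γ) * ((1 - r ^ (N - M + 1)) / (1 - r)) := by ring
    _ = Real.exp ((N : ℝ) ^ γ) * ∑ k ∈ Finset.range (N - M + 1), r ^ k := by rw [geom]
    _ = ∑ j ∈ Finset.Icc M N, Real.exp ((N : ℝ) ^ γ) * r ^ (N - j) := by
        rw [← reidx, Finset.mul_sum]
    _ ≤ ∑ j ∈ Finset.Icc M N, Real.exp ((j : ℝ) ^ γ) := Finset.sum_le_sum step
    _ ≤ ∑ j ∈ Finset.Icc 1 N, Real.exp ((j : ℝ) ^ γ) := by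
        apply Finset.sum_le_sum_of_subset_of_nonneg hsub
        intro j _ _
        exact (Real.exp_pos _).le



lemma tendsto_one_sub_exp_div : Tendsto (fun t : ℝ => (1 - Real.exp (-t)) / t) (nhdsWithin 0 {(0:ℝ)}ᶜ) (nhds 1) := by
  have h2 : HasDerivAt (fun t : ℝ => Real.exp (-t)) (Real.exp (-(0:ℝ)) * (-1)) 0 :=
    ((hasDerivAt_id (0:ℝ)).neg).exp
  have h3 : HasDerivAt (fun t : ℝ => 1 - Real.exp (-t)) 1 0 := by
    have := (hasDerivAt_const (0:ℝ) (1:ℝ)).sub h2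
    simp at this; exact this
  rw [hasDerivAt_iff_tendsto_slope] at h3
  apply h3.congr'
  filter_upwards [self_mem_nhdsWithin] with t ht
  simp only [Set.mem_compl_iff, Set.mem_singleton_iff] at ht
  simp [slope_def_field, div_eq_div_iff, sub_zero]

lemma one_sub_exp_ratio {x y : ℕ → ℝ}
    (hx : ∀ᶠ m in atTop, 0 < x m) (hy : ∀ᶠ m in atTop, 0 < y m)
    (hx0 : Tendsto x atTop (nhds 0)) (hy0 : Tendsto y atTop (nhds 0))
    (hxy : Tendsto (fun m => x m / y m) atTop (nhds 1)) :
    Tendsto (fun m => (1 - Real.exp (-x m)) / (1 - Real.exp (-y m))) atTop (nhds 1) := by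
  set f : ℝ → ℝ := fun t => (1 - Real.exp (-t)) / t with hf
  have hfx : Tendsto (fun m => f (x m)) atTop (nhds 1) :=
    tendsto_one_sub_exp_div.comp (tendsto_nhdsWithin_of_tendsto_nhds_of_eventually_within _ hx0
      (hx.mono fun m h => by simp [h.ne']))
  have hfy : Tendsto (fun m => f (y m)) atTop (nhds 1) :=
    tendsto_one_sub_exp_div.comp (tendsto_nhdsWithin_of_tendsto_nhds_of_eventually_within _ hy0
      (hy.mono fun m h => by simp [h.ne']))
  have key : Tendsto (fun m => f (x m) / f (y m) * (x m / y m)) atTop (nhds 1) := by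
    have := (hfx.div hfy one_ne_zero).mul hxy
    simpa using this
  apply key.congr'
  filter_upwards [hx, hy] with m hxm hym
  have h1 : 0 < 1 - Real.exp (-x m) := by
    have : Real.exp (-x m) < 1 := Real.exp_lt_one_iff.mpr (by linarith)
    linarith
  have h2 : 0 < 1 - Real.exp (-y m) := by
    have : Real.exp (-y m) < 1 := Real.exp_lt_one_iff.mpr (by linarith)
    linarith
  simp only [hf]
  field_simp

noncomputable def Kf (γ : ℝ) (N : ℕ) : ℕ := ⌈(N : ℝ) ^ (1 - γ) * Real.log N⌉₊
noncomputable def Mf (γ : ℝ) (N : ℕ) : ℕ := N - Kf γ N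

lemma K_div {γ : ℝ} (hγ0 : 0 < γ) (hγ1 : γ < 1) :
    Tendsto (fun N : ℕ => (Kf γ N : ℝ) / N) atTop (nhds 0) := by
  have hlog : Tendsto (fun N : ℕ => Real.log N / (N : ℝ) ^ γ) atTop (nhds 0) :=
    ((isLittleO_log_rpow_atTop hγ0).tendsto_div_nhds_zero).comp
      tendsto_natCast_atTop_atTop
  have hinv : Tendsto (fun N : ℕ => (N : ℝ)⁻¹) atTop (nhds 0) := tendsto_inv_atTop_zero.comp
      tendsto_natCast_atTop_atTop
  have hub : Tendsto (fun N : ℕ => Real.log N / (N : ℝ) ^ γ + (N : ℝ)⁻¹) atTop (nhds 0) := by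
    simpa using hlog.add hinv
  apply tendsto_of_tendsto_of_tendsto_of_le_of_le' tendsto_const_nhds hub
  · filter_upwards [eventually_ge_atTop 1] with N hN
    positivity
  · filter_upwards [eventually_ge_atTop 1] with N hN
    have hNpos : (0 : ℝ) < N := by exact_mod_cast hN
    have hlogN : 0 ≤ Real.log N := Real.log_nonneg (by exact_mod_cast hN)
    have hKle : (Kf γ N : ℝ) ≤ (N : ℝ) ^ (1 - γ) * Real.log N + 1 :=
      (Nat.ceil_lt_add_one (by positivity)).le
    have hkey : (N : ℝ) ^ (1 - γ) * Real.log N / N = Real.log N / (N : ℝ) ^ γ := by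
      rw [div_eq_div_iff hNpos.ne' (by positivity)]
      have : (N : ℝ) ^ (1 - γ) * (N : ℝ) ^ γ = N := by
        rw [← Real.rpow_add hNpos]
        simp
      nlinarith [this]
    calc (Kf γ N : ℝ) / N ≤ ((N : ℝ) ^ (1 - γ) * Real.log N + 1) / N := by gcongr
      _ = Real.log N / (N : ℝ) ^ γ + (N : ℝ)⁻¹ := by
          rw [add_div, hkey, inv_eq_one_div]

lemma M_div {γ : ℝ} (hγ0 : 0 < γ) (hγ1 : γ < 1) :
    Tendsto (fun N : ℕ => (Mf γ N : ℝ) / N) atTop (nhds 1) := by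
  have hK := K_div hγ0 hγ1
  have hev : ∀ᶠ N : ℕ in atTop, (Mf γ N : ℝ) / N = 1 - (Kf γ N : ℝ) / N := by
    have h2 : ∀ᶠ N : ℕ in atTop, (Kf γ N : ℝ) / N < 1 := by
      have := hK.eventually (eventually_lt_nhds (by norm_num : (0:ℝ) < 1))
      exact this
    filter_upwards [h2, eventually_ge_atTop 1] with N hN h1
    have hNpos : (0 : ℝ) < N := by exact_mod_cast h1
    have hKN : Kf γ N ≤ N := by
      by_contra hcon
      push_neg at hcon
      have : (N : ℝ) < Kf γ N := by exact_mod_cast hcon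
      have : (1 : ℝ) < (Kf γ N : ℝ) / N := by rw [lt_div_iff₀ hNpos]; linarith
      linarith
    rw [Mf, Nat.cast_sub hKN]
    field_simp
  have : Tendsto (fun N : ℕ => 1 - (Kf γ N : ℝ) / N) atTop (nhds 1) := by
    simpa using tendsto_const_nhds.sub hK
  exact Filter.Tendsto.congr' (hev.mono fun N h => h.symm) this





lemma M_top {γ : ℝ} (hγ0 : 0 < γ) (hγ1 : γ < 1) : Tendsto (Mf γ) atTop atTop := by
  rw [tendsto_atTop]
  intro b
  have h1 : ∀ᶠ N : ℕ in atTop, (1:ℝ)/2 < (Mf γ N : ℝ) / N :=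
    (M_div hγ0 hγ1).eventually (eventually_gt_nhds (by norm_num))
  filter_upwards [h1, eventually_ge_atTop (2 * b + 1)] with N hN hb
  have hNpos : (0:ℝ) < N := by
    have : 1 ≤ N := by omega
    exact_mod_cast this
  have : (N : ℝ) / 2 < (Mf γ N : ℝ) := by
    rw [lt_div_iff₀ hNpos] at hN
    linarith
  have hb' : (b : ℝ) ≤ (N : ℝ) / 2 := by
    have : (2 * b + 1 : ℕ) ≤ N := hb
    have : (2 * b + 1 : ℝ) ≤ N := by exact_mod_cast this
    linarith
  exact_mod_cast (hb'.trans_lt this).le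

lemma rho_zero {γ : ℝ} (hγ0 : 0 < γ) (hγ1 : γ < 1) :
    Tendsto (fun N : ℕ => Real.exp (-(γ * (Mf γ N : ℝ) ^ (γ - 1))) ^ (N - Mf γ N + 1))
      atTop (nhds 0) := by
  have hub : Tendsto (fun N : ℕ => (N : ℝ) ^ (-γ)) atTop (nhds 0) :=
    (tendsto_rpow_neg_atTop hγ0).comp tendsto_natCast_atTop_atTop
  apply tendsto_of_tendsto_of_tendsto_of_le_of_le' tendsto_const_nhds hub
  · filter_upwards with N
    positivity
  · filter_upwards [(M_top hγ0 hγ1).eventually_ge_atTop 1, eventually_ge_atTop 1] with N hM hN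
    have hNpos : (0:ℝ) < N := by exact_mod_cast hN
    have hMpos : (0:ℝ) < (Mf γ N : ℝ) := by exact_mod_cast hM
    have hMN : Mf γ N ≤ N := Nat.sub_le _ _
    have hlogN : 0 ≤ Real.log N := Real.log_nonneg (by exact_mod_cast hN)
    -- N - Mf γ N + 1 ≥ Kf γ N  (since Mf = N - Kf, N - Mf = min Kf N)
    -- key bound: γ * M^(γ-1) * (N - M + 1) ≥ γ * log N
    have hkey : γ * Real.log N ≤ γ * (Mf γ N : ℝ) ^ (γ - 1) * ((N - Mf γ N + 1 : ℕ) : ℝ) := by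
      have hmono : (N : ℝ) ^ (γ - 1) ≤ (Mf γ N : ℝ) ^ (γ - 1) :=
        Real.rpow_le_rpow_of_nonpos hMpos (by exact_mod_cast hMN) (by linarith)
      have hKge : (N : ℝ) ^ (1 - γ) * Real.log N ≤ ((N - Mf γ N + 1 : ℕ) : ℝ) := by
        have h0 := Nat.le_ceil ((N : ℝ) ^ (1 - γ) * Real.log N)
        have h1 : Kf γ N ≤ N - Mf γ N + 1 := by
          have hM2 : 1 ≤ N - Kf γ N := hM
          have hMf : Mf γ N = N - Kf γ N := rfl
          rw [hMf]
          omega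
        calc (N : ℝ) ^ (1 - γ) * Real.log N ≤ (Kf γ N : ℝ) := h0
          _ ≤ _ := by exact_mod_cast h1
      have hprod : (N : ℝ) ^ (γ - 1) * ((N : ℝ) ^ (1 - γ) * Real.log N) ≤
          (Mf γ N : ℝ) ^ (γ - 1) * ((N - Mf γ N + 1 : ℕ) : ℝ) := by
        apply mul_le_mul hmono hKge (by positivity) (by positivity)
      have hid : (N : ℝ) ^ (γ - 1) * ((N : ℝ) ^ (1 - γ) * Real.log N) = Real.log N := by
        rw [← mul_assoc, ← Real.rpow_add hNpos]
        norm_num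
      rw [hid] at hprod
      calc γ * Real.log N ≤ γ * ((Mf γ N : ℝ) ^ (γ - 1) * ((N - Mf γ N + 1 : ℕ) : ℝ)) :=
            mul_le_mul_of_nonneg_left hprod hγ0.le
        _ = _ := by ring
    rw [← Real.exp_nat_mul]
    have hrw : (N : ℝ) ^ (-γ) = Real.exp (-(γ * Real.log N)) := by
      rw [Real.rpow_def_of_pos hNpos]
      ring_nf
    rw [hrw]
    apply Real.exp_le_exp.mpr
    nlinarith [hkey]



lemma exp_small {γ : ℝ} (hγ1 : γ < 1) {P : ℕ → ℕ} (hP : Tendsto P atTop atTop) :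
    Tendsto (fun m => γ * (P m : ℝ) ^ (γ - 1)) atTop (nhds 0) := by
  have h0 : Tendsto (fun m => ((P m : ℝ)) ^ (-(1 - γ))) atTop (nhds 0) :=
    (tendsto_rpow_neg_atTop (by linarith)).comp (tendsto_natCast_atTop_atTop.comp hP)
  have h2 : Tendsto (fun m => γ * ((P m : ℝ)) ^ (-(1 - γ))) atTop (nhds (γ * 0)) :=
    tendsto_const_nhds.mul h0
  simpa [neg_sub] using h2

lemma exp_arg_ratio {γ : ℝ} (hγ0 : 0 < γ) {P Q : ℕ → ℕ}
    (hP : Tendsto P atTop atTop) (hQ : Tendsto Q atTop atTop)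
    (h : Tendsto (fun m => (P m : ℝ) / (Q m : ℝ)) atTop (nhds 1)) :
    Tendsto (fun m => γ * (P m : ℝ) ^ (γ - 1) / (γ * (Q m : ℝ) ^ (γ - 1))) atTop (nhds 1) := by
  have hcont : Tendsto (fun m => ((P m : ℝ) / (Q m : ℝ)) ^ (γ - 1)) atTop (nhds 1) := by
    have hc : ContinuousAt (fun t : ℝ => t ^ (γ - 1)) 1 :=
      Real.continuousAt_rpow_const 1 (γ - 1) (Or.inl one_ne_zero)
    have := hc.tendsto.comp h
    simpa [Real.one_rpow, Function.comp_def] using this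
  apply hcont.congr'
  filter_upwards [hP.eventually_ge_atTop 1, hQ.eventually_ge_atTop 1] with m hPm hQm
  have hP0 : (0:ℝ) < P m := by exact_mod_cast hPm
  have hQ0 : (0:ℝ) < Q m := by exact_mod_cast hQm
  rw [Real.div_rpow hP0.le hQ0.le]
  rw [mul_div_mul_left _ _ hγ0.ne']

lemma ratio_tendsto {γ : ℝ} (hγ0 : 0 < γ) (hγ1 : γ < 1) (N1 N2 : ℕ → ℕ)
    (hle : ∀ᶠ m in atTop, N1 m ≤ N2 m)
    (htop : Tendsto N1 atTop atTop)
    (hrat : Tendsto (fun m => (N2 m : ℝ) / (N1 m : ℝ)) atTop (nhds 1))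
    (c : ℝ) (hc : Tendsto (fun m => (N2 m : ℝ) ^ γ - (N1 m : ℝ) ^ γ) atTop (nhds c)) :
    Tendsto (fun m => (∑ j ∈ Finset.Icc 1 (N1 m), Real.exp ((j : ℝ) ^ γ)) /
        ∑ j ∈ Finset.Icc 1 (N2 m), Real.exp ((j : ℝ) ^ γ)) atTop (nhds (Real.exp (-c))) := by
  have htop2 : Tendsto N2 atTop atTop := tendsto_atTop_mono' atTop hle htop
  set q : ℕ → ℝ := fun N => Real.exp (-(γ * (N : ℝ) ^ (γ - 1))) with hqdef
  set rr : ℕ → ℝ := fun N => Real.exp (-(γ * (Mf γ N : ℝ) ^ (γ - 1))) with hrdef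
  set ρ : ℕ → ℝ := fun N => rr N ^ (N - Mf γ N + 1) with hρdef
  set E : ℕ → ℝ := fun m => Real.exp ((N1 m : ℝ) ^ γ - (N2 m : ℝ) ^ γ) with hEdef
  set A : ℕ → ℝ := fun m => E m * ((1 - q (N2 m)) * (1 - ρ (N1 m)) / (1 - rr (N1 m))) with hAdef
  set B : ℕ → ℝ := fun m => E m * ((1 - rr (N2 m)) / ((1 - q (N1 m)) * (1 - ρ (N2 m)))) with hBdef
  -- Tendsto of E
  have hE : Tendsto E atTop (nhds (Real.exp (-c))) := by
    have : Tendsto (fun m => -((N2 m : ℝ) ^ γ - (N1 m : ℝ) ^ γ)) atTop (nhds (-c)) := hc.neg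
    have := (Real.continuous_exp.tendsto _).comp this
    apply this.congr
    intro m
    simp [hEdef, neg_sub]
  -- M composed with N1 / N2
  have hM1top : Tendsto (fun m => Mf γ (N1 m)) atTop atTop := (M_top hγ0 hγ1).comp htop
  have hM2top : Tendsto (fun m => Mf γ (N2 m)) atTop atTop := (M_top hγ0 hγ1).comp htop2
  have hM1div : Tendsto (fun m => (Mf γ (N1 m) : ℝ) / (N1 m : ℝ)) atTop (nhds 1) :=
    (M_div hγ0 hγ1).comp htop
  have hM2div : Tendsto (fun m => (Mf γ (N2 m) : ℝ) / (N2 m : ℝ)) atTop (nhds 1) :=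
    (M_div hγ0 hγ1).comp htop2
  -- ratio N2 / Mf(N1) → 1
  have hrat1 : Tendsto (fun m => (N2 m : ℝ) / (Mf γ (N1 m) : ℝ)) atTop (nhds 1) := by
    have hinv : Tendsto (fun m => (N1 m : ℝ) / (Mf γ (N1 m) : ℝ)) atTop (nhds 1) := by
      have := hM1div.inv₀ one_ne_zero
      rw [inv_one] at this
      apply this.congr'
      filter_upwards [hM1top.eventually_ge_atTop 1, htop.eventually_ge_atTop 1] with m h1 h2
      have hM0 : (0:ℝ) < Mf γ (N1 m) := by exact_mod_cast h1
      have hN0 : (0:ℝ) < N1 m := by exact_mod_cast h2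
      field_simp
    have := hrat.mul hinv
    rw [mul_one] at this
    apply this.congr'
    filter_upwards [hM1top.eventually_ge_atTop 1, htop.eventually_ge_atTop 1] with m h1 h2
    have hM0 : (0:ℝ) < Mf γ (N1 m) := by exact_mod_cast h1
    have hN0 : (0:ℝ) < N1 m := by exact_mod_cast h2
    field_simp
  -- ratio Mf(N2) / N1 → 1
  have hrat2 : Tendsto (fun m => (Mf γ (N2 m) : ℝ) / (N1 m : ℝ)) atTop (nhds 1) := by
    have := hM2div.mul hrat
    rw [mul_one] at this
    apply this.congr'
    filter_upwards [htop2.eventually_ge_atTop 1, htop.eventually_ge_atTop 1] with m h1 h2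
    have hN2 : (0:ℝ) < N2 m := by exact_mod_cast h1
    have hN1 : (0:ℝ) < N1 m := by exact_mod_cast h2
    field_simp
  -- one_sub_exp ratios
  have hx2 : ∀ᶠ m in atTop, 0 < γ * (N2 m : ℝ) ^ (γ - 1) := by
    filter_upwards [htop2.eventually_ge_atTop 1] with m h1
    have : (0:ℝ) < N2 m := by exact_mod_cast h1
    positivity
  have hx1 : ∀ᶠ m in atTop, 0 < γ * (N1 m : ℝ) ^ (γ - 1) := by
    filter_upwards [htop.eventually_ge_atTop 1] with m h1
    have : (0:ℝ) < N1 m := by exact_mod_cast h1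
    positivity
  have hxM1 : ∀ᶠ m in atTop, 0 < γ * (Mf γ (N1 m) : ℝ) ^ (γ - 1) := by
    filter_upwards [hM1top.eventually_ge_atTop 1] with m h1
    have : (0:ℝ) < Mf γ (N1 m) := by exact_mod_cast h1
    positivity
  have hxM2 : ∀ᶠ m in atTop, 0 < γ * (Mf γ (N2 m) : ℝ) ^ (γ - 1) := by
    filter_upwards [hM2top.eventually_ge_atTop 1] with m h1
    have : (0:ℝ) < Mf γ (N2 m) := by exact_mod_cast h1
    positivity
  have t1 : Tendsto (fun m => (1 - q (N2 m)) / (1 - rr (N1 m))) atTop (nhds 1) :=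
    one_sub_exp_ratio hx2 hxM1 (exp_small hγ1 htop2) (exp_small hγ1 hM1top)
      (exp_arg_ratio hγ0 htop2 hM1top hrat1)
  have t2 : Tendsto (fun m => (1 - rr (N2 m)) / (1 - q (N1 m))) atTop (nhds 1) :=
    one_sub_exp_ratio hxM2 hx1 (exp_small hγ1 hM2top) (exp_small hγ1 htop)
      (exp_arg_ratio hγ0 hM2top htop hrat2)
  have tρ1 : Tendsto (fun m => ρ (N1 m)) atTop (nhds 0) := (rho_zero hγ0 hγ1).comp htop
  have tρ2 : Tendsto (fun m => ρ (N2 m)) atTop (nhds 0) := (rho_zero hγ0 hγ1).comp htop2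
  -- limits of A and B
  have hA : Tendsto A atTop (nhds (Real.exp (-c))) := by
    have : Tendsto (fun m => E m * ((1 - q (N2 m)) / (1 - rr (N1 m)) * (1 - ρ (N1 m))))
        atTop (nhds (Real.exp (-c) * (1 * (1 - 0)))) :=
      hE.mul (t1.mul (tendsto_const_nhds.sub tρ1))
    simp only [mul_one, sub_zero] at this
    apply this.congr
    intro m
    ring
  have hB : Tendsto B atTop (nhds (Real.exp (-c))) := by
    have : Tendsto (fun m => E m * ((1 - rr (N2 m)) / (1 - q (N1 m)) / (1 - ρ (N2 m))))
        atTop (nhds (Real.exp (-c) * (1 / (1 - 0)))) :=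
      hE.mul (t2.div (tendsto_const_nhds.sub tρ2) (by norm_num))
    simp only [sub_zero, div_one, mul_one] at this
    apply this.congr
    intro m
    rw [hBdef]
    simp only [div_div]
  -- eventual inequalities
  apply tendsto_of_tendsto_of_tendsto_of_le_of_le' hA hB
  · -- A ≤ ratio
    filter_upwards [hM1top.eventually_ge_atTop 1, hM2top.eventually_ge_atTop 1,
      htop.eventually_ge_atTop 1, htop2.eventually_ge_atTop 1] with m hM1 hM2 hN1 hN2
    have hM1N : Mf γ (N1 m) ≤ N1 m := Nat.sub_le _ _
    have hM2N : Mf γ (N2 m) ≤ N2 m := Nat.sub_le _ _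
    have hN1R : (0:ℝ) < N1 m := by exact_mod_cast hN1
    have hN2R : (0:ℝ) < N2 m := by exact_mod_cast hN2
    have hM1R : (0:ℝ) < Mf γ (N1 m) := by exact_mod_cast hM1
    have hM2R : (0:ℝ) < Mf γ (N2 m) := by exact_mod_cast hM2
    have hq1 : q (N1 m) < 1 := Real.exp_lt_one_iff.mpr (by simp; positivity)
    have hq2 : q (N2 m) < 1 := Real.exp_lt_one_iff.mpr (by simp; positivity)
    have hr1 : rr (N1 m) < 1 := Real.exp_lt_one_iff.mpr (by simp; positivity)
    have hr2 : rr (N2 m) < 1 := Real.exp_lt_one_iff.mpr (by simp; positivity)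
    have hr1p : 0 < rr (N1 m) := Real.exp_pos _
    have hr2p : 0 < rr (N2 m) := Real.exp_pos _
    have hρ1 : ρ (N1 m) < 1 := pow_lt_one₀ hr1p.le hr1 (by omega)
    have hρ2 : ρ (N2 m) < 1 := pow_lt_one₀ hr2p.le hr2 (by omega)
    have hρ1p : 0 < ρ (N1 m) := pow_pos hr1p _
    have hρ2p : 0 < ρ (N2 m) := pow_pos hr2p _
    have hS2pos : 0 < ∑ j ∈ Finset.Icc 1 (N2 m), Real.exp ((j : ℝ) ^ γ) := by
      apply Finset.sum_pos (fun j _ => Real.exp_pos _)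
      exact ⟨1, Finset.mem_Icc.mpr ⟨le_refl 1, hN2⟩⟩
    have hU2 : ∑ j ∈ Finset.Icc 1 (N2 m), Real.exp ((j : ℝ) ^ γ) ≤
        Real.exp ((N2 m : ℝ) ^ γ) / (1 - q (N2 m)) := sum_upper hγ0 hγ1.le _ hN2
    have hL1 : Real.exp ((N1 m : ℝ) ^ γ) * (1 - ρ (N1 m)) / (1 - rr (N1 m)) ≤
        ∑ j ∈ Finset.Icc 1 (N1 m), Real.exp ((j : ℝ) ^ γ) :=
      sum_lower hγ0 hγ1.le _ _ hM1 hM1N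
    have hAeq : A m = (Real.exp ((N1 m : ℝ) ^ γ) * (1 - ρ (N1 m)) / (1 - rr (N1 m))) /
        (Real.exp ((N2 m : ℝ) ^ γ) / (1 - q (N2 m))) := by
      rw [hAdef, hEdef]
      simp only
      rw [Real.exp_sub]
      field_simp
    rw [hAeq]
    apply div_le_div₀ (Finset.sum_nonneg fun j _ => (Real.exp_pos _).le) hL1 (by positivity) hU2
  · -- ratio ≤ B
    filter_upwards [hM1top.eventually_ge_atTop 1, hM2top.eventually_ge_atTop 1,
      htop.eventually_ge_atTop 1, htop2.eventually_ge_atTop 1] with m hM1 hM2 hN1 hN2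
    have hM2N : Mf γ (N2 m) ≤ N2 m := Nat.sub_le _ _
    have hN1R : (0:ℝ) < N1 m := by exact_mod_cast hN1
    have hN2R : (0:ℝ) < N2 m := by exact_mod_cast hN2
    have hM2R : (0:ℝ) < Mf γ (N2 m) := by exact_mod_cast hM2
    have hq1 : q (N1 m) < 1 := Real.exp_lt_one_iff.mpr (by simp; positivity)
    have hr2 : rr (N2 m) < 1 := Real.exp_lt_one_iff.mpr (by simp; positivity)
    have hr2p : 0 < rr (N2 m) := Real.exp_pos _
    have hρ2 : ρ (N2 m) < 1 := pow_lt_one₀ hr2p.le hr2 (by omega)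
    have hρ2p : 0 < ρ (N2 m) := pow_pos hr2p _
    have hU1 : ∑ j ∈ Finset.Icc 1 (N1 m), Real.exp ((j : ℝ) ^ γ) ≤
        Real.exp ((N1 m : ℝ) ^ γ) / (1 - q (N1 m)) := sum_upper hγ0 hγ1.le _ hN1
    have hL2 : Real.exp ((N2 m : ℝ) ^ γ) * (1 - ρ (N2 m)) / (1 - rr (N2 m)) ≤
        ∑ j ∈ Finset.Icc 1 (N2 m), Real.exp ((j : ℝ) ^ γ) :=
      sum_lower hγ0 hγ1.le _ _ hM2 hM2N
    have hBeq : B m = (Real.exp ((N1 m : ℝ) ^ γ) / (1 - q (N1 m))) /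
        (Real.exp ((N2 m : ℝ) ^ γ) * (1 - ρ (N2 m)) / (1 - rr (N2 m))) := by
      rw [hBdef, hEdef]
      simp only
      rw [Real.exp_sub]
      field_simp
    have hd1 : 0 < 1 - q (N1 m) := by linarith
    have hd2 : 0 < 1 - rr (N2 m) := by linarith
    have hd3 : 0 < 1 - ρ (N2 m) := by linarith
    rw [hBeq]
    apply div_le_div₀ (div_nonneg (Real.exp_pos _).le hd1.le) hU1
      (div_pos (mul_pos (Real.exp_pos _) hd3) hd2) hL2



noncomputable def xf (γ : ℝ) (m : ℕ) : ℝ := ((2 * m : ℕ) : ℝ) ^ (2 * (1 - γ))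
noncomputable def af (γ : ℝ) (α : ℕ) (m : ℕ) : ℕ := ⌊((⌊xf γ m / (α : ℝ)⌋₊ : ℝ) - 1) / 2⌋₊
noncomputable def bf (γ : ℝ) (m : ℕ) : ℕ := ⌊xf γ m⌋₊
noncomputable def N1f (γ : ℝ) (α : ℕ) (m : ℕ) : ℕ := (2 * m) ^ 2 + af γ α m
noncomputable def N2f (γ : ℝ) (m : ℕ) : ℕ := (2 * m) ^ 2 + bf γ m

lemma two_m_top : Tendsto (fun m : ℕ => 2 * m) atTop atTop :=
  tendsto_atTop_atTop.mpr fun b => ⟨b, fun a ha => by omega⟩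

lemma x_top {γ : ℝ} (h2 : γ < 1) : Tendsto (xf γ) atTop atTop :=
  (tendsto_rpow_atTop (by linarith)).comp (tendsto_natCast_atTop_atTop.comp two_m_top)

lemma b_div_x {γ : ℝ} (h2 : γ < 1) :
    Tendsto (fun m => (bf γ m : ℝ) / xf γ m) atTop (nhds 1) := by
  have hx := x_top h2
  have hlow : Tendsto (fun m => 1 - (xf γ m)⁻¹) atTop (nhds 1) := by
    simpa using tendsto_const_nhds.sub (hx.inv_tendsto_atTop)
  apply tendsto_of_tendsto_of_tendsto_of_le_of_le' hlow tendsto_const_nhds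
  · filter_upwards [hx.eventually_ge_atTop 1] with m hm
    have hxp : 0 < xf γ m := by linarith
    have hb : xf γ m - 1 < (bf γ m : ℝ) := Nat.sub_one_lt_floor (xf γ m)
    rw [le_div_iff₀ hxp]
    have hinv : (xf γ m)⁻¹ * xf γ m = 1 := inv_mul_cancel₀ hxp.ne'
    nlinarith [hb]
  · filter_upwards [hx.eventually_ge_atTop 1] with m hm
    have hxp : 0 < xf γ m := by linarith
    rw [div_le_one hxp]
    exact Nat.floor_le (by linarith)

lemma a_div_x {γ : ℝ} (h2 : γ < 1) {α : ℕ} (hα : 0 < α) :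
    Tendsto (fun m => (af γ α m : ℝ) / xf γ m) atTop (nhds (1 / (2 * (α : ℝ)))) := by
  have hx := x_top h2
  have hαR : (0:ℝ) < α := by exact_mod_cast hα
  have hlow : Tendsto (fun m => 1 / (2 * (α:ℝ)) - 2 * (xf γ m)⁻¹) atTop
      (nhds (1 / (2 * (α : ℝ)))) := by
    have h0 : Tendsto (fun m => 2 * (xf γ m)⁻¹) atTop (nhds (2 * 0)) :=
      (hx.inv_tendsto_atTop).const_mul (2:ℝ)
    have := Tendsto.sub (tendsto_const_nhds :
      Tendsto (fun _ : ℕ => 1 / (2 * (α:ℝ))) atTop (nhds (1 / (2 * (α:ℝ))))) h0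
    simpa using this
  apply tendsto_of_tendsto_of_tendsto_of_le_of_le' hlow tendsto_const_nhds
  · -- lower bound : 1/(2α) - 2/x ≤ a/x
    filter_upwards [hx.eventually_ge_atTop (4 * (α:ℝ))] with m hm
    have hxp : 0 < xf γ m := lt_of_lt_of_le (by positivity) hm
    set x := xf γ m with hxdef
    set t : ℕ := ⌊x / (α : ℝ)⌋₊ with ht
    have hxa : (4:ℝ) ≤ x / α := by rw [le_div_iff₀ hαR]; linarith
    have ht1 : x / α - 1 < (t : ℝ) := Nat.sub_one_lt_floor _
    have ha1 : ((t:ℝ) - 1) / 2 - 1 < (af γ α m : ℝ) := Nat.sub_one_lt_floor _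
    have hax : x / (2 * α) - 2 < (af γ α m : ℝ) := by
      have hx2 : x / (2 * α) = x / α / 2 := by
        rw [div_div]
        ring_nf
      rw [hx2]
      linarith
    rw [le_div_iff₀ hxp]
    have e1 : (1 / (2 * (α:ℝ)) - 2 * x⁻¹) * x = x / (2 * α) - 2 := by
      field_simp
    linarith [e1 ▸ hax]
  · -- upper bound : a/x ≤ 1/(2α)
    filter_upwards [hx.eventually_ge_atTop 1] with m hm
    have hxp : 0 < xf γ m := by linarith
    set x := xf γ m with hxdef
    set t : ℕ := ⌊x / (α : ℝ)⌋₊ with ht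
    have htle : (t : ℝ) ≤ x / α := Nat.floor_le (by positivity)
    have key : (af γ α m : ℝ) ≤ x / (2 * α) := by
      rcases le_or_gt 0 (((t:ℝ) - 1) / 2) with h | h
      · have := Nat.floor_le h
        have h2' : ((t:ℝ) - 1) / 2 ≤ x / (2 * α) := by
          rw [div_le_div_iff₀ (by norm_num) (by positivity)]
          have : x / α * α = x := div_mul_cancel₀ x hαR.ne'
          nlinarith [htle]
        calc (af γ α m : ℝ) ≤ ((t:ℝ) - 1) / 2 := this
          _ ≤ _ := h2'
      · have : af γ α m = 0 := Nat.floor_eq_zero.mpr (by linarith)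
        rw [this]
        simp only [Nat.cast_zero]
        positivity
    rw [div_le_iff₀ hxp]
    have : 1 / (2 * (α:ℝ)) * x = x / (2 * α) := by ring
    linarith [this ▸ key]

section app
variable {γ : ℝ} {α : ℕ}

lemma a_le_b (hγ : 0 < 1 - γ) (hα : 0 < α) (m : ℕ) : af γ α m ≤ bf γ m := by
  have hx0 : 0 ≤ xf γ m := Real.rpow_nonneg (by positivity) _
  have h1 : af γ α m ≤ ⌊xf γ m / (α : ℝ)⌋₊ := by
    have := Nat.floor_le_floor (R := ℝ)
      (show ((⌊xf γ m / (α : ℝ)⌋₊ : ℝ) - 1) / 2 ≤ ((⌊xf γ m / (α : ℝ)⌋₊ : ℕ) : ℝ) by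
        have : (0:ℝ) ≤ (⌊xf γ m / (α : ℝ)⌋₊ : ℝ) := by positivity
        linarith)
    simpa [af, Nat.floor_natCast] using this
  have h2 : ⌊xf γ m / (α : ℝ)⌋₊ ≤ bf γ m := by
    apply Nat.floor_le_floor
    apply div_le_self hx0
    exact_mod_cast hα
  exact h1.trans h2

lemma sq_pos (m : ℕ) (hm : 1 ≤ m) : (0:ℝ) < (((2 * m) ^ 2 : ℕ) : ℝ) := by
  have : (1:ℕ) ≤ (2 * m) ^ 2 := by nlinarith
  exact_mod_cast this

lemma x_div_sq (hγ0 : 0 < γ) : Tendsto (fun m => xf γ m / (((2 * m) ^ 2 : ℕ) : ℝ))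
    atTop (nhds 0) := by
  have hlim : Tendsto (fun m : ℕ => ((2 * m : ℕ) : ℝ) ^ (-(2 * γ))) atTop (nhds 0) :=
    (tendsto_rpow_neg_atTop (by linarith)).comp (tendsto_natCast_atTop_atTop.comp two_m_top)
  apply hlim.congr'
  filter_upwards [eventually_ge_atTop 1] with m hm
  have hn : (0:ℝ) < ((2 * m : ℕ) : ℝ) := by
    have : (1:ℕ) ≤ 2 * m := by omega
    exact_mod_cast this
  have hcast : (((2 * m) ^ 2 : ℕ) : ℝ) = ((2 * m : ℕ) : ℝ) ^ ((2:ℕ) : ℝ) := by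
    rw [Real.rpow_natCast]
    push_cast
    ring
  rw [xf, hcast, ← Real.rpow_sub hn]
  congr 1
  push_cast
  ring

lemma inv_sq_x (hm : 1 ≤ m) : (((2 * m) ^ 2 : ℕ) : ℝ) ^ (γ - 1) * xf γ m = 1 := by
  have hn : (0:ℝ) < ((2 * m : ℕ) : ℝ) := by
    have : (1:ℕ) ≤ 2 * m := by omega
    exact_mod_cast this
  have hcast : (((2 * m) ^ 2 : ℕ) : ℝ) = ((2 * m : ℕ) : ℝ) ^ ((2:ℕ) : ℝ) := by
    rw [Real.rpow_natCast]
    push_cast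
    ring
  rw [xf, hcast, ← Real.rpow_mul hn.le, ← Real.rpow_add hn,
    show ((2:ℕ):ℝ) * (γ - 1) + 2 * (1 - γ) = 0 by push_cast; ring, Real.rpow_zero]

end app

section app2
variable {γ : ℝ} {α : ℕ}

lemma N1_div_sq (hγ0 : 0 < γ) (h2 : γ < 1) (hα : 0 < α) :
    Tendsto (fun m => (N1f γ α m : ℝ) / (((2 * m) ^ 2 : ℕ) : ℝ)) atTop (nhds 1) := by
  have h0 : Tendsto (fun m => 1 + (af γ α m : ℝ) / xf γ m * (xf γ m / (((2 * m) ^ 2 : ℕ) : ℝ)))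
      atTop (nhds (1 + 1 / (2 * (α : ℝ)) * 0)) :=
    tendsto_const_nhds.add ((a_div_x h2 hα).mul (x_div_sq hγ0))
  rw [mul_zero, add_zero] at h0
  apply h0.congr'
  filter_upwards [(x_top h2).eventually_ge_atTop 1, eventually_ge_atTop 1] with m hx hm
  have hxp : 0 < xf γ m := by linarith
  have hsq := sq_pos m hm
  rw [N1f]
  push_cast
  field_simp

lemma N2_div_sq (hγ0 : 0 < γ) (h2 : γ < 1) :
    Tendsto (fun m => (N2f γ m : ℝ) / (((2 * m) ^ 2 : ℕ) : ℝ)) atTop (nhds 1) := by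
  have h0 : Tendsto (fun m => 1 + (bf γ m : ℝ) / xf γ m * (xf γ m / (((2 * m) ^ 2 : ℕ) : ℝ)))
      atTop (nhds (1 + 1 * 0)) :=
    tendsto_const_nhds.add ((b_div_x h2).mul (x_div_sq hγ0))
  rw [mul_zero, add_zero] at h0
  apply h0.congr'
  filter_upwards [(x_top h2).eventually_ge_atTop 1, eventually_ge_atTop 1] with m hx hm
  have hxp : 0 < xf γ m := by linarith
  have hsq := sq_pos m hm
  rw [N2f]
  push_cast
  field_simp

lemma N_rat (hγ0 : 0 < γ) (h2 : γ < 1) (hα : 0 < α) :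
    Tendsto (fun m => (N2f γ m : ℝ) / (N1f γ α m : ℝ)) atTop (nhds 1) := by
  have := (N2_div_sq hγ0 h2 (γ := γ)).div (N1_div_sq hγ0 h2 hα) one_ne_zero
  rw [div_one] at this
  apply this.congr'
  filter_upwards [eventually_ge_atTop 1] with m hm
  have hsq := sq_pos m hm
  have hN1 : (0:ℝ) < (N1f γ α m : ℝ) := by
    have : (1:ℕ) ≤ N1f γ α m := by
      rw [N1f]
      nlinarith
    exact_mod_cast this
  simp only [Pi.div_apply]
  field_simp

lemma rpow_to_one (hγ0 : 0 < γ) {f : ℕ → ℝ} (hf : Tendsto f atTop (nhds 1)) :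
    Tendsto (fun m => f m ^ (γ - 1)) atTop (nhds 1) := by
  have hc : ContinuousAt (fun t : ℝ => t ^ (γ - 1)) 1 :=
    Real.continuousAt_rpow_const 1 (γ - 1) (Or.inl one_ne_zero)
  have := hc.tendsto.comp hf
  simpa [Real.one_rpow, Function.comp_def] using this

lemma hc_main (hγ0 : 0 < γ) (h2 : γ < 1) (hα : 0 < α) :
    Tendsto (fun m => (N2f γ m : ℝ) ^ γ - (N1f γ α m : ℝ) ^ γ) atTop
      (nhds (γ * (1 - 1 / (2 * (α : ℝ))))) := by
  have hD : Tendsto (fun m => ((bf γ m : ℝ) - (af γ α m : ℝ)) / xf γ m) atTop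
      (nhds (1 - 1 / (2 * (α : ℝ)))) := by
    have := (b_div_x h2).sub (a_div_x h2 hα)
    apply this.congr
    intro m
    rw [sub_div]
  have hL : Tendsto (fun m => γ * ((N2f γ m : ℝ) / (((2 * m) ^ 2 : ℕ) : ℝ)) ^ (γ - 1) *
      (((bf γ m : ℝ) - (af γ α m : ℝ)) / xf γ m)) atTop
      (nhds (γ * (1 - 1 / (2 * (α : ℝ))))) := by
    have := ((tendsto_const_nhds : Tendsto (fun _ : ℕ => γ) atTop (nhds γ)).mul
      (rpow_to_one hγ0 (N2_div_sq hγ0 h2))).mul hD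
    simpa using this
  have hU : Tendsto (fun m => γ * ((N1f γ α m : ℝ) / (((2 * m) ^ 2 : ℕ) : ℝ)) ^ (γ - 1) *
      (((bf γ m : ℝ) - (af γ α m : ℝ)) / xf γ m)) atTop
      (nhds (γ * (1 - 1 / (2 * (α : ℝ))))) := by
    have := ((tendsto_const_nhds : Tendsto (fun _ : ℕ => γ) atTop (nhds γ)).mul
      (rpow_to_one hγ0 (N1_div_sq hγ0 h2 hα))).mul hD
    simpa using this
  apply tendsto_of_tendsto_of_tendsto_of_le_of_le' hL hU
  · filter_upwards [(x_top h2).eventually_ge_atTop 1, eventually_ge_atTop 1] with m hx hm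
    have hxp : 0 < xf γ m := by linarith
    have hsq := sq_pos m hm
    have hab := a_le_b (γ := γ) (by linarith) hα m
    have hN1 : (0:ℝ) < (N1f γ α m : ℝ) := by
      have : (1:ℕ) ≤ N1f γ α m := by rw [N1f]; nlinarith
      exact_mod_cast this
    have hN12 : (N1f γ α m : ℝ) ≤ (N2f γ m : ℝ) := by
      have : N1f γ α m ≤ N2f γ m := by rw [N1f, N2f]; omega
      exact_mod_cast this
    have hN2 : (0:ℝ) < (N2f γ m : ℝ) := lt_of_lt_of_le hN1 hN12
    -- identity: γ * (N2/n²)^(γ-1) * ((b-a)/x) = γ * N2^(γ-1) * (b - a)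
    have hkey : (((2 * m) ^ 2 : ℕ) : ℝ) ^ (γ - 1) * xf γ m = 1 := inv_sq_x hm
    have hid : ∀ N : ℝ, 0 < N → γ * (N / (((2 * m) ^ 2 : ℕ) : ℝ)) ^ (γ - 1) *
        (((bf γ m : ℝ) - (af γ α m : ℝ)) / xf γ m) =
        γ * N ^ (γ - 1) * ((bf γ m : ℝ) - (af γ α m : ℝ)) := by
      intro N hN
      rw [Real.div_rpow hN.le hsq.le]
      have hsqp : 0 < (((2 * m) ^ 2 : ℕ) : ℝ) ^ (γ - 1) := Real.rpow_pos_of_pos hsq _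
      field_simp
      linear_combination (-((bf γ m : ℝ) - (af γ α m : ℝ))) * hkey
    rw [hid _ hN2]
    -- tangent : N1^γ ≤ N2^γ + γ N2^(γ-1) (N1 - N2)
    have ht := tangent hγ0 h2.le hN2 hN1.le
    have hdiff : (N1f γ α m : ℝ) - (N2f γ m : ℝ) = -((bf γ m : ℝ) - (af γ α m : ℝ)) := by
      rw [N1f, N2f]
      push_cast
      ring
    rw [hdiff] at ht
    nlinarith [ht]
  · filter_upwards [(x_top h2).eventually_ge_atTop 1, eventually_ge_atTop 1] with m hx hm
    have hxp : 0 < xf γ m := by linarith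
    have hsq := sq_pos m hm
    have hab := a_le_b (γ := γ) (by linarith) hα m
    have hN1 : (0:ℝ) < (N1f γ α m : ℝ) := by
      have : (1:ℕ) ≤ N1f γ α m := by rw [N1f]; nlinarith
      exact_mod_cast this
    have hN12 : (N1f γ α m : ℝ) ≤ (N2f γ m : ℝ) := by
      have : N1f γ α m ≤ N2f γ m := by rw [N1f, N2f]; omega
      exact_mod_cast this
    have hkey : (((2 * m) ^ 2 : ℕ) : ℝ) ^ (γ - 1) * xf γ m = 1 := inv_sq_x hm
    have hid : ∀ N : ℝ, 0 < N → γ * (N / (((2 * m) ^ 2 : ℕ) : ℝ)) ^ (γ - 1) *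
        (((bf γ m : ℝ) - (af γ α m : ℝ)) / xf γ m) =
        γ * N ^ (γ - 1) * ((bf γ m : ℝ) - (af γ α m : ℝ)) := by
      intro N hN
      rw [Real.div_rpow hN.le hsq.le]
      have hsqp : 0 < (((2 * m) ^ 2 : ℕ) : ℝ) ^ (γ - 1) := Real.rpow_pos_of_pos hsq _
      field_simp
      linear_combination (-((bf γ m : ℝ) - (af γ α m : ℝ))) * hkey
    rw [hid _ hN1]
    -- tangent : N2^γ ≤ N1^γ + γ N1^(γ-1) (N2 - N1)
    have ht := tangent hγ0 h2.le hN1 (by linarith : (0:ℝ) ≤ (N2f γ m : ℝ))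
    have hdiff : (N2f γ m : ℝ) - (N1f γ α m : ℝ) = (bf γ m : ℝ) - (af γ α m : ℝ) := by
      rw [N1f, N2f]
      push_cast
      ring
    rw [hdiff] at ht
    nlinarith [ht]

end app2

theorem stmt_4 (γ : ℝ) (h1 : 1 / 2 < γ) (h2 : γ < 1) (α : ℕ) (hα : 0 < α) :
    Filter.Tendsto
      (fun m : ℕ =>
        let n : ℕ := 2 * m
        (∑ j ∈ Finset.Icc 1
            (n ^ 2 +
              ⌊((⌊(n : ℝ) ^ (2 * (1 - γ)) / (α : ℝ)⌋₊ : ℝ) - 1) / 2⌋₊),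
            Real.exp ((j : ℝ) ^ γ)) /
          ∑ j ∈ Finset.Icc 1 (n ^ 2 + ⌊(n : ℝ) ^ (2 * (1 - γ))⌋₊),
            Real.exp ((j : ℝ) ^ γ))
      Filter.atTop (nhds (Real.exp (-γ * (1 - 1 / (2 * (α : ℝ)))))) := by
  have hγ0 : 0 < γ := by linarith
  have main := ratio_tendsto hγ0 h2 (N1f γ α) (N2f γ)
    (Filter.Eventually.of_forall fun m => by
      have := a_le_b (γ := γ) (by linarith) hα m
      rw [N1f, N2f]
      omega)
    (tendsto_atTop_mono (fun m => by
      simp only [id_eq]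
      calc m ≤ 2 * m := by omega
        _ ≤ (2 * m) ^ 2 := Nat.le_self_pow two_ne_zero _
        _ ≤ N1f γ α m := Nat.le_add_right _ _) tendsto_id)
    (N_rat hγ0 h2 hα) _ (hc_main hγ0 h2 hα)
  rw [show -(γ * (1 - 1 / (2 * (α : ℝ)))) = -γ * (1 - 1 / (2 * (α : ℝ))) by ring] at main
  exact main
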